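/- arXiv:math/0610811 — 2 statements merged into one kernel-verified Lean document; each statement's English description precedes it below -/
import Mathlib

section
/- Let F: ℝ² → (-∞, ∞] be bounded below with m := |inf F|, and suppose that inf_{x,y ∈ [-a,a]^c} (F(x,y) + m) → ∞ as a → ∞. Then for every L > 0, the set {μ ∈ 𝓜₁(ℝ) : ∫∫ F dμ⊗dμ ≤ L} is uniformly tight, i.e. contained in a relatively compact subset of 𝓜₁(ℝ) in the weak topology. -/
open MeasureTheory Filter Set
open scoped ENNReal NNReal Topology

lemma abs_mono_nonneg : ∀ {x y : EReal}, 0 ≤ x → x ≤ y → x.abs ≤ y.abs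
  | ⊥, _, h0, _ => by simp at h0
  | (x : ℝ), ⊥, _, h => by simp at h
  | (x : ℝ), (y : ℝ), h0, h => by
      have hx : (0:ℝ) ≤ x := by exact_mod_cast h0
      have hxy : x ≤ y := by exact_mod_cast h
      rw [EReal.abs_def, EReal.abs_def, abs_of_nonneg hx, abs_of_nonneg (hx.trans hxy)]
      exact ENNReal.ofReal_le_ofReal hxy
  | _, ⊤, _, _ => by simp
  | ⊤, (y : ℝ), _, h => by simp at h

lemma level_set_tight (F : ℝ × ℝ → EReal) (m : ℝ)
    (hcoer : Tendsto (fun a : ℝ =>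
        ⨅ p ∈ {q : ℝ × ℝ | a < |q.1| ∧ a < |q.2|}, (F p + (m : EReal)))
      atTop atTop) (L : ℝ) (hL : 0 < L) (e : ℝ) (he : 0 < e) :
    ∃ a : ℝ, ∀ μ : ProbabilityMeasure ℝ,
      ((∫⁻ p, (F p + (m : EReal)).abs
            ∂((μ : Measure ℝ).prod (μ : Measure ℝ)) : ℝ≥0∞) : EReal) - (m : EReal)
          ≤ (L : EReal) →
      (μ : Measure ℝ) {x | a < |x|} ≤ ENNReal.ofReal e := by
  set B : ℝ := (L + |m| + 1) / (e * e) with hBdef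
  have hB : 0 < B := by positivity
  obtain ⟨a, ha⟩ := (hcoer.eventually_ge_atTop (B : EReal)).exists
  refine ⟨a, fun μ hμ => ?_⟩
  set I : ℝ≥0∞ := ∫⁻ p, (F p + (m : EReal)).abs ∂((μ : Measure ℝ).prod (μ : Measure ℝ)) with hIdef
  -- upper bound on I
  have hI : I ≠ ⊤ := by
    rintro hI
    rw [hI, EReal.coe_ennreal_top, EReal.top_sub_coe] at hμ
    exact (EReal.coe_lt_top L).not_ge hμ
  have h2 : ((I : EReal)) = ((I.toReal : ℝ) : EReal) := by
    rw [← EReal.coe_toReal (x := (I:EReal)) (by simp [hI]) (by simp), EReal.toReal_coe_ennreal]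
  rw [h2, ← EReal.coe_sub, EReal.coe_le_coe_iff, sub_le_iff_le_add] at hμ
  have hIle : I ≤ ENNReal.ofReal (L + m) := by
    calc I = ENNReal.ofReal I.toReal := (ENNReal.ofReal_toReal hI).symm
    _ ≤ _ := ENNReal.ofReal_le_ofReal hμ
  -- lower bound on I
  set A : Set ℝ := {x | a < |x|} with hAdef
  have hA : MeasurableSet A := by
    have : A = abs ⁻¹' Ioi a := rfl
    rw [this]
    exact (measurable_abs) measurableSet_Ioi
  have hprod : {q : ℝ × ℝ | a < |q.1| ∧ a < |q.2|} = A ×ˢ A := rfl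
  have key : ENNReal.ofReal B * ((μ : Measure ℝ) A * (μ : Measure ℝ) A) ≤ I := by
    rw [← Measure.prod_prod]
    calc ENNReal.ofReal B * ((μ : Measure ℝ).prod (μ : Measure ℝ)) (A ×ˢ A)
        = ∫⁻ p, (A ×ˢ A).indicator (fun _ => ENNReal.ofReal B) p
            ∂((μ : Measure ℝ).prod (μ : Measure ℝ)) := by
          rw [lintegral_indicator_const (hA.prod hA)]
    _ ≤ I := by
        refine lintegral_mono ?_
        refine Set.indicator_le fun p hp => ?_
        have h1 : (B : EReal) ≤ F p + m := by
          refine le_trans ha ?_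
          rw [hprod]
          exact iInf₂_le p hp
        calc ENNReal.ofReal B = ((B : EReal)).abs := by
              rw [EReal.abs_def, abs_of_nonneg hB.le]
        _ ≤ (F p + m).abs := abs_mono_nonneg (by exact_mod_cast hB.le) h1
  -- combine
  have hsq : (μ : Measure ℝ) A * (μ : Measure ℝ) A ≤ ENNReal.ofReal e * ENNReal.ofReal e := by
    have h3 : (μ : Measure ℝ) A * (μ : Measure ℝ) A ≤ ENNReal.ofReal (L + m) / ENNReal.ofReal B := by
      rw [ENNReal.le_div_iff_mul_le (Or.inl (by simp [ENNReal.ofReal_eq_zero]; linarith))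
        (Or.inl ENNReal.ofReal_ne_top), mul_comm]
      exact key.trans hIle
    refine h3.trans ?_
    rw [← ENNReal.ofReal_div_of_pos hB, ← ENNReal.ofReal_mul he.le]
    refine ENNReal.ofReal_le_ofReal ?_
    have : e * e * ((L + |m| + 1) / (e * e)) = L + |m| + 1 := by
      field_simp
    rw [div_le_iff₀ hB, hBdef, this]
    nlinarith [le_abs_self m, abs_nonneg m]
  by_contra hlt
  push_neg at hlt
  exact absurd (lt_of_lt_of_le (ENNReal.mul_lt_mul hlt hlt) hsq) (lt_irrefl _)

section conv
variable (ν : ℕ → ProbabilityMeasure ℝ) (μ : ProbabilityMeasure ℝ)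

def Good (x : ℝ) : Prop :=
  Tendsto (fun n => (ν n : Measure ℝ) (Iic x)) atTop (𝓝 ((μ : Measure ℝ) (Iic x)))

lemma good_sup {x y : ℝ} (hx : Good ν μ x) (hy : Good ν μ y) : Good ν μ (x ⊔ y) := by
  rcases le_total x y with h | h
  · rwa [sup_eq_right.2 h]
  · rwa [sup_eq_left.2 h]

lemma good_inf {x y : ℝ} (hx : Good ν μ x) (hy : Good ν μ y) : Good ν μ (x ⊓ y) := by
  rcases le_total x y with h | h
  · rwa [inf_eq_left.2 h]
  · rwa [inf_eq_right.2 h]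

lemma tendsto_Ioc {c d : ℝ} (hc : Good ν μ c) (hd : Good ν μ d) :
    Tendsto (fun n => (ν n : Measure ℝ) (Ioc c d)) atTop (𝓝 ((μ : Measure ℝ) (Ioc c d))) := by
  rcases le_or_gt c d with h | h
  · have hdiff : ∀ ρ : ProbabilityMeasure ℝ,
        (ρ : Measure ℝ) (Ioc c d) = (ρ : Measure ℝ) (Iic d) - (ρ : Measure ℝ) (Iic c) := by
      intro ρ
      rw [← Iic_sdiff_Iic, measure_diff (Iic_subset_Iic.2 h) measurableSet_Iic.nullMeasurableSet
        (measure_ne_top _ _)]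
    have key := ENNReal.Tendsto.sub hd hc (Or.inl (measure_ne_top _ _))
    have h2 := key.congr fun n => (hdiff (ν n)).symm
    rwa [← hdiff μ] at h2
  · simp only [Set.Ioc_eq_empty (lt_asymm h), measure_empty]
    exact tendsto_const_nhds

lemma tendsto_biUnion : ∀ (k : ℕ) (t : Finset (ℝ × ℝ)), t.card ≤ k →
    (∀ p ∈ t, Good ν μ p.1 ∧ Good ν μ p.2) →
    Tendsto (fun n => (ν n : Measure ℝ) (⋃ p ∈ t, Ioc p.1 p.2)) atTop
      (𝓝 ((μ : Measure ℝ) (⋃ p ∈ t, Ioc p.1 p.2))) := by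
  intro k
  induction k with
  | zero =>
    intro t ht _
    rw [Nat.le_zero, Finset.card_eq_zero] at ht
    subst ht
    simp only [Finset.notMem_empty, Set.iUnion_of_empty, Set.iUnion_empty, measure_empty]
    exact tendsto_const_nhds
  | succ k ih =>
    intro t ht hgood
    rcases t.eq_empty_or_nonempty with rfl | ⟨p₀, hp₀⟩
    · simp only [Finset.notMem_empty, Set.iUnion_of_empty, Set.iUnion_empty, measure_empty]
      exact tendsto_const_nhds
    · set t' := t.erase p₀ with ht'def
      have hins : t = insert p₀ t' := (Finset.insert_erase hp₀).symm
      have hcard' : t'.card ≤ k := by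
        have h1 : t'.card = t.card - 1 := by
          rw [ht'def]; exact Finset.card_erase_of_mem hp₀
        have h2 : 0 < t.card := Finset.card_pos.2 ⟨p₀, hp₀⟩
        omega
      set A : Set ℝ := ⋃ p ∈ t', Ioc p.1 p.2 with hAdef
      set B : Set ℝ := Ioc p₀.1 p₀.2 with hBdef
      have hU : (⋃ p ∈ t, Ioc p.1 p.2) = A ∪ B := by
        rw [hins]
        simp only [Finset.set_biUnion_insert, hAdef, hBdef]
        exact Set.union_comm _ _
      -- intersection as biUnion over image
      set t'' : Finset (ℝ × ℝ) := t'.image (fun p => (p.1 ⊔ p₀.1, p.2 ⊓ p₀.2)) with ht''def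
      have hAB : A ∩ B = ⋃ p ∈ t'', Ioc p.1 p.2 := by
        rw [hAdef, Set.iUnion₂_inter, ht''def]
        ext x
        simp only [Set.mem_iUnion, Finset.mem_image, exists_prop]
        constructor
        · rintro ⟨p, hp, hx⟩
          exact ⟨_, ⟨p, hp, rfl⟩, by rwa [← Set.Ioc_inter_Ioc]⟩
        · rintro ⟨q, ⟨p, hp, rfl⟩, hx⟩
          exact ⟨p, hp, by rwa [← Set.Ioc_inter_Ioc] at hx⟩
      have hgood' : ∀ p ∈ t', Good ν μ p.1 ∧ Good ν μ p.2 := fun p hp =>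
        hgood p (Finset.erase_subset _ _ hp)
      have hgood'' : ∀ p ∈ t'', Good ν μ p.1 ∧ Good ν μ p.2 := by
        rintro q hq
        rw [ht''def, Finset.mem_image] at hq
        obtain ⟨p, hp, rfl⟩ := hq
        exact ⟨good_sup ν μ (hgood' p hp).1 (hgood p₀ hp₀).1,
          good_inf ν μ (hgood' p hp).2 (hgood p₀ hp₀).2⟩
      have hA : Tendsto (fun n => (ν n : Measure ℝ) A) atTop (𝓝 ((μ : Measure ℝ) A)) :=
        ih t' hcard' hgood'
      have hB : Tendsto (fun n => (ν n : Measure ℝ) B) atTop (𝓝 ((μ : Measure ℝ) B)) :=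
        tendsto_Ioc ν μ (hgood p₀ hp₀).1 (hgood p₀ hp₀).2
      have hABt : Tendsto (fun n => (ν n : Measure ℝ) (A ∩ B)) atTop
          (𝓝 ((μ : Measure ℝ) (A ∩ B))) := by
        rw [hAB]
        exact ih t'' ((Finset.card_image_le).trans hcard') hgood''
      have hform : ∀ ρ : ProbabilityMeasure ℝ,
          (ρ : Measure ℝ) (A ∪ B) = (ρ : Measure ℝ) A + (ρ : Measure ℝ) B
            - (ρ : Measure ℝ) (A ∩ B) := by
        intro ρ
        exact ENNReal.eq_sub_of_add_eq (measure_ne_top _ _)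
          (measure_union_add_inter A measurableSet_Ioc)
      rw [hU, hform μ]
      exact (ENNReal.Tendsto.sub (hA.add hB) hABt (Or.inr (measure_ne_top _ _))).congr
        fun n => (hform (ν n)).symm
end conv

lemma tendsto_of_good_dense {D : Set ℝ} (hD : Dense D) (hgood : ∀ x ∈ D, Good ν μ x) :
    Tendsto ν atTop (𝓝 μ) := by
  apply MeasureTheory.tendsto_of_forall_isOpen_le_liminf
  intro G hG
  -- reduce to ℝ≥0∞
  have main : (μ : Measure ℝ) G ≤ atTop.liminf (fun n => (ν n : Measure ℝ) G) := by
    refine ENNReal.le_of_forall_pos_le_add fun ε hε hfin => ?_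
    obtain ⟨K, hKG, hKc, hKlt⟩ := hG.measurableSet.exists_isCompact_lt_add
      (μ := (μ : Measure ℝ)) (measure_ne_top _ _) (ε := ε) (by exact_mod_cast hε.ne')
    -- cover K by good Iocs inside G
    have hcov : ∀ x : ℝ, x ∈ K → ∃ c d : ℝ, c ∈ D ∧ d ∈ D ∧ c < x ∧ x < d ∧ Ioc c d ⊆ G := by
      intro x hx
      obtain ⟨δ, hδ, hball⟩ := Metric.isOpen_iff.1 hG x (hKG hx)
      rw [Real.ball_eq_Ioo] at hball
      obtain ⟨c, hcD, hc⟩ := hD.exists_between (show x - δ < x by linarith)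
      obtain ⟨d, hdD, hd⟩ := hD.exists_between (show x < x + δ by linarith)
      exact ⟨c, d, hcD, hdD, hc.2, hd.1, fun y hy =>
        hball ⟨hc.1.trans hy.1, lt_of_le_of_lt hy.2 hd.2⟩⟩
    choose! c d hcD hdD hcx hxd hsub using hcov
    obtain ⟨s, hs⟩ := hKc.elim_finite_subcover (fun x : K => Ioo (c x) (d x))
      (fun _ => isOpen_Ioo) (fun x hx => Set.mem_iUnion.2 ⟨⟨x, hx⟩, ⟨hcx x hx, hxd x hx⟩⟩)
    set t : Finset (ℝ × ℝ) := s.image (fun x : K => (c x, d x)) with htdef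
    set U : Set ℝ := ⋃ p ∈ t, Ioc p.1 p.2 with hUdef
    have hKU : K ⊆ U := by
      intro y hy
      obtain ⟨x, hxs, hyx⟩ := by
        simpa only [Set.mem_iUnion, exists_prop] using hs hy
      exact Set.mem_biUnion (Finset.mem_image_of_mem _ hxs) ⟨hyx.1, hyx.2.le⟩
    have hUG : U ⊆ G := by
      refine Set.iUnion₂_subset fun p hp => ?_
      rw [htdef, Finset.mem_image] at hp
      obtain ⟨x, hxs, rfl⟩ := hp
      exact hsub x x.2
    have hgoodt : ∀ p ∈ t, Good ν μ p.1 ∧ Good ν μ p.2 := by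
      intro p hp
      rw [htdef, Finset.mem_image] at hp
      obtain ⟨x, hxs, rfl⟩ := hp
      exact ⟨hgood _ (hcD x x.2), hgood _ (hdD x x.2)⟩
    have hUt : Tendsto (fun n => (ν n : Measure ℝ) U) atTop (𝓝 ((μ : Measure ℝ) U)) :=
      tendsto_biUnion ν μ t.card t le_rfl hgoodt
    calc (μ : Measure ℝ) G ≤ (μ : Measure ℝ) K + ε := hKlt.le
    _ ≤ (μ : Measure ℝ) U + ε := add_le_add_left (measure_mono hKU) ε
    _ = atTop.liminf (fun n => (ν n : Measure ℝ) U) + ε := by rw [hUt.liminf_eq]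
    _ ≤ atTop.liminf (fun n => (ν n : Measure ℝ) G) + ε := by
        gcongr
        exact liminf_le_liminf (Eventually.of_forall fun n => measure_mono hUG)
  -- convert to ℝ≥0
  have aux : (ENNReal.ofNNReal (atTop.liminf fun i => ν i G)) =
      atTop.liminf (fun i => ((ν i G : ℝ≥0) : ℝ≥0∞)) := by
    refine Monotone.map_liminf_of_continuousAt (F := atTop) ENNReal.coe_mono (fun i => ν i G)
      ENNReal.continuous_coe.continuousAt ?_ ⟨0, by simp⟩
    exact IsBoundedUnder.isCoboundedUnder_ge ⟨1, by simp [Eventually.of_forall]⟩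
  rw [← ENNReal.coe_le_coe, aux]
  simpa only [ProbabilityMeasure.ennreal_coeFn_eq_coeFn_toMeasure] using main

lemma helly (ν : ℕ → ProbabilityMeasure ℝ)
    (htight : ∀ e : ℝ, 0 < e → ∃ a : ℝ, ∀ n,
      (ν n : Measure ℝ) {x | a < |x|} ≤ ENNReal.ofReal e) :
    ∃ (μ : ProbabilityMeasure ℝ) (φ : ℕ → ℕ), StrictMono φ ∧
      Tendsto (fun n => ν (φ n)) atTop (𝓝 μ) := by
  classical
  set u : ℕ → ℚ → ℝ := fun n q => ((ν n : Measure ℝ) (Iic (q : ℝ))).toReal with hudef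
  have humem : ∀ n, u n ∈ Set.pi Set.univ (fun _ : ℚ => Icc (0:ℝ) 1) := by
    intro n q _
    exact ⟨ENNReal.toReal_nonneg, by
      simpa using ENNReal.toReal_mono (by simp) (prob_le_one (μ := (ν n : Measure ℝ)))⟩
  have hK : IsCompact (Set.pi Set.univ (fun _ : ℚ => Icc (0:ℝ) 1)) :=
    isCompact_univ_pi fun _ => isCompact_Icc
  obtain ⟨G, hGK, φ, hφ, hconv⟩ := hK.isSeqCompact humem
  have hq : ∀ q : ℚ, Tendsto (fun n => u (φ n) q) atTop (𝓝 (G q)) :=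
    fun q => tendsto_pi_nhds.1 hconv q
  have hG0 : ∀ q, 0 ≤ G q := fun q => (hGK q (Set.mem_univ q)).1
  have hG1 : ∀ q, G q ≤ 1 := fun q => (hGK q (Set.mem_univ q)).2
  have humono : ∀ n (q r : ℚ), q ≤ r → u n q ≤ u n r := by
    intro n q r h
    exact ENNReal.toReal_mono (measure_ne_top _ _)
      (measure_mono (Iic_subset_Iic.2 (by exact_mod_cast h)))
  have hGmono : ∀ q r : ℚ, q ≤ r → G q ≤ G r := fun q r h =>
    le_of_tendsto_of_tendsto' (hq q) (hq r) fun n => humono _ _ _ h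
  -- the candidate limit cdf
  set f₀ : ℝ → ℝ := fun x => sInf (G '' {q : ℚ | x < (q : ℝ)}) with hf₀def
  have hne : ∀ x : ℝ, (G '' {q : ℚ | x < (q : ℝ)}).Nonempty := by
    intro x
    obtain ⟨q, hq'⟩ := exists_rat_gt x
    exact ⟨G q, q, hq', rfl⟩
  have hbdd : ∀ x : ℝ, BddBelow (G '' {q : ℚ | x < (q : ℝ)}) := by
    rintro x
    exact ⟨0, by rintro y ⟨q, -, rfl⟩; exact hG0 q⟩
  have hle : ∀ (x : ℝ) (q : ℚ), x < (q : ℝ) → f₀ x ≤ G q :=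
    fun x q h => csInf_le (hbdd x) ⟨q, h, rfl⟩
  have hge : ∀ (q : ℚ) (x : ℝ), (q : ℝ) ≤ x → G q ≤ f₀ x := by
    intro q x h
    refine le_csInf (hne x) ?_
    rintro y ⟨r, hr, rfl⟩
    exact hGmono q r (by exact_mod_cast h.trans_lt hr |>.le)
  have hmono : Monotone f₀ := by
    intro x y h
    exact le_csInf (hne y) fun b hb => by
      obtain ⟨r, hr, rfl⟩ := hb
      exact csInf_le (hbdd x) ⟨r, h.trans_lt hr, rfl⟩
  have hf01 : ∀ x, 0 ≤ f₀ x ∧ f₀ x ≤ 1 := by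
    intro x
    constructor
    · refine le_csInf (hne x) ?_
      rintro y ⟨r, -, rfl⟩; exact hG0 r
    · obtain ⟨q, hq'⟩ := exists_rat_gt x
      exact (hle x q hq').trans (hG1 q)
  have hrc : ∀ x : ℝ, ContinuousWithinAt f₀ (Ici x) x := by
    intro x
    rw [Metric.continuousWithinAt_iff]
    intro ε hε
    obtain ⟨y, ⟨q, hxq, rfl⟩, hy⟩ := exists_lt_of_csInf_lt (hne x)
      (show f₀ x < f₀ x + ε by linarith)
    have hxq' : x < (q : ℝ) := hxq
    refine ⟨(q : ℝ) - x, by linarith, fun y hy' hdist => ?_⟩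
    have h1 : y < (q : ℝ) := by
      rw [Real.dist_eq, abs_lt] at hdist
      linarith
    have h2 : f₀ y ≤ G q := hle y q h1
    have h3 : f₀ x ≤ f₀ y := hmono hy'
    rw [Real.dist_eq, abs_lt]
    constructor <;> linarith
  set f : StieltjesFunction ℝ := ⟨f₀, hmono, hrc⟩ with hfdef
  -- tail estimates
  have tail : ∀ e : ℝ, 0 < e → ∃ a : ℝ, 0 < a ∧ (∀ q : ℚ, a < (q : ℝ) → 1 - e ≤ G q) ∧
      (∀ q : ℚ, (q : ℝ) < -a → G q ≤ e) := by
    intro e he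
    obtain ⟨a₀, ha₀⟩ := htight e he
    set a : ℝ := max a₀ 1 with hadef
    have haa : a₀ ≤ a := le_max_left _ _
    refine ⟨a, lt_max_of_lt_right one_pos, ?_, ?_⟩
    · intro q hq'
      have key : ∀ n, 1 - e ≤ u n q := by
        intro n
        have hsub : (Iic (q : ℝ))ᶜ ⊆ {x : ℝ | a₀ < |x|} := by
          rw [Set.compl_Iic]
          intro y hy
          simp only [Set.mem_Ioi] at hy
          have : (q : ℝ) ≤ |y| := le_trans hy.le (le_abs_self y)
          exact lt_of_le_of_lt haa (lt_of_lt_of_le hq' this)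
        have hcompl := measure_add_measure_compl (μ := (ν n : Measure ℝ))
          (measurableSet_Iic (a := (q : ℝ)))
        apply congrArg ENNReal.toReal at hcompl
        rw [ENNReal.toReal_add (measure_ne_top _ _) (measure_ne_top _ _), measure_univ,
          ENNReal.toReal_one] at hcompl
        have htail : ((ν n : Measure ℝ) (Iic (q : ℝ))ᶜ).toReal ≤ e := by
          refine le_trans (ENNReal.toReal_mono ENNReal.ofReal_ne_top
            (le_trans (measure_mono hsub) (ha₀ n))) ?_
          rw [ENNReal.toReal_ofReal he.le]
        have : u n q = 1 - ((ν n : Measure ℝ) (Iic (q : ℝ))ᶜ).toReal := by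
          simp only [hudef]; linarith
        rw [this]
        linarith
      exact ge_of_tendsto (hq q) (Eventually.of_forall fun n => key (φ n))
    · intro q hq'
      have key : ∀ n, u n q ≤ e := by
        intro n
        have hsub : Iic (q : ℝ) ⊆ {x : ℝ | a₀ < |x|} := by
          intro y hy
          simp only [Set.mem_Iic] at hy
          have h1 : -(q : ℝ) ≤ |y| :=
            le_trans (by linarith) (neg_le_abs y)
          exact lt_of_le_of_lt haa (by linarith [neg_lt_neg hq'])
        refine le_trans (ENNReal.toReal_mono ENNReal.ofReal_ne_top
          (le_trans (measure_mono hsub) (ha₀ n))) ?_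
        rw [ENNReal.toReal_ofReal he.le]
      exact le_of_tendsto (hq q) (Eventually.of_forall fun n => key (φ n))
  -- limits of f₀ at ±∞
  have hf1 : Tendsto f₀ atTop (𝓝 1) := by
    rw [Metric.tendsto_atTop]
    intro ε hε
    obtain ⟨a, -, htop, -⟩ := tail (ε / 2) (by linarith)
    obtain ⟨q, hq'⟩ := exists_rat_gt a
    refine ⟨(q : ℝ), fun x hx => ?_⟩
    have h1 : 1 - ε / 2 ≤ f₀ x := le_trans (htop q hq') (hge q x hx)
    have h2 : f₀ x ≤ 1 := (hf01 x).2
    rw [Real.dist_eq, abs_lt]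
    constructor <;> linarith
  have hf0 : Tendsto f₀ atBot (𝓝 0) := by
    rw [NormedAddCommGroup.tendsto_nhds_zero]
    intro ε hε
    obtain ⟨a, -, -, hbot⟩ := tail (ε / 2) (by linarith)
    obtain ⟨q, hq'⟩ := exists_rat_lt (-a)
    filter_upwards [eventually_le_atBot ((q : ℝ) - 1)] with x hx
    have h1 : f₀ x ≤ G q := hle x q (by linarith)
    have h2 : 0 ≤ f₀ x := (hf01 x).1
    have h3 : G q ≤ ε / 2 := hbot q hq'
    rw [Real.norm_eq_abs, abs_lt]
    constructor <;> linarith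
  -- the limit probability measure
  have hprob : IsProbabilityMeasure f.measure := f.isProbabilityMeasure hf0 hf1
  set μlim : ProbabilityMeasure ℝ := ⟨f.measure, hprob⟩ with hμlimdef
  -- convergence at continuity points
  have hgood : ∀ x : ℝ, ContinuousAt f₀ x → Good (fun n => ν (φ n)) μlim x := by
    intro x hx
    have hreal : Tendsto (fun n => ((ν (φ n) : Measure ℝ) (Iic x)).toReal)
        atTop (𝓝 (f₀ x)) := by
      rw [Metric.tendsto_atTop]
      intro ε hε
      -- right approximation
      obtain ⟨y, ⟨r, hxr, rfl⟩, hy⟩ := exists_lt_of_csInf_lt (hne x)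
        (show f₀ x < f₀ x + ε / 3 by linarith)
      have hxr' : x < (r : ℝ) := hxr
      -- left approximation via continuity
      obtain ⟨δ, hδ, hcont⟩ := Metric.continuousAt_iff.1 hx (ε / 3) (by linarith)
      obtain ⟨p, hp1, hp2⟩ := exists_rat_btwn (show x - δ / 2 < x by linarith)
      have hGp : f₀ (x - δ / 2) ≤ G p := hle _ p hp1
      have hfxd : f₀ x - ε / 3 < f₀ (x - δ / 2) := by
        have := hcont (show dist (x - δ / 2) x < δ by
          rw [Real.dist_eq, abs_lt]; constructor <;> linarith)
        rw [Real.dist_eq, abs_lt] at this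
        linarith
      -- eventual bounds
      have h1 := Metric.tendsto_atTop.1 (hq p) (ε / 3) (by linarith)
      have h2 := Metric.tendsto_atTop.1 (hq r) (ε / 3) (by linarith)
      obtain ⟨N1, hN1⟩ := h1
      obtain ⟨N2, hN2⟩ := h2
      refine ⟨max N1 N2, fun n hn => ?_⟩
      have hup := hN1 n (le_trans (le_max_left _ _) hn)
      have hur := hN2 n (le_trans (le_max_right _ _) hn)
      rw [Real.dist_eq, abs_lt] at hup hur ⊢
      have hmono1 : u (φ n) p ≤ ((ν (φ n) : Measure ℝ) (Iic x)).toReal :=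
        ENNReal.toReal_mono (measure_ne_top _ _) (measure_mono (Iic_subset_Iic.2 hp2.le))
      have hmono2 : ((ν (φ n) : Measure ℝ) (Iic x)).toReal ≤ u (φ n) r :=
        ENNReal.toReal_mono (measure_ne_top _ _) (measure_mono (Iic_subset_Iic.2 hxr.le))
      have hGpf : G p ≤ f₀ x := hge p x hp2.le
      constructor <;> nlinarith [hmono1, hmono2, hup.1, hup.2, hur.1, hur.2]
    have hIic : (μlim : Measure ℝ) (Iic x) = ENNReal.ofReal (f₀ x) := by
      show f.measure (Iic x) = ENNReal.ofReal (f₀ x)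
      rw [f.measure_Iic hf0 x]
      norm_num
      rfl
    unfold Good
    rw [hIic]
    have := (ENNReal.continuous_ofReal.tendsto (f₀ x)).comp hreal
    refine this.congr fun n => ?_
    simp only [Function.comp_apply]
    exact ENNReal.ofReal_toReal (measure_ne_top _ _)
  -- conclude via dense set of continuity points
  have hdense : Dense {x : ℝ | ContinuousAt f₀ x} := by
    have hcnt : Set.Countable {x : ℝ | ¬ContinuousAt f₀ x} := hmono.countable_not_continuousAt
    have := hcnt.dense_compl ℝ
    simpa [Set.compl_setOf, not_not] using this
  exact ⟨μlim, φ, hφ,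
    tendsto_of_good_dense hdense fun x hx => hgood x hx⟩


/-- If `F : ℝ² → (-∞,∞]` is bounded below by `-m` and
`inf_{|x|,|y| > a} (F + m) → ∞` as `a → ∞`, then for every `L > 0` the level set
`{μ : ∫∫ F dμ⊗dμ ≤ L}` is relatively compact in the weak topology. -/
theorem energy_level_sets_tight (F : ℝ × ℝ → EReal) (m : ℝ)
    (hbd : ∀ p, (0 : EReal) ≤ F p + (m : EReal))
    (hcoer : Tendsto (fun a : ℝ =>
        ⨅ p ∈ {q : ℝ × ℝ | a < |q.1| ∧ a < |q.2|}, (F p + (m : EReal)))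
      atTop atTop) :
    ∀ L : ℝ, 0 < L →
      IsCompact (closure {μ : ProbabilityMeasure ℝ |
        ((∫⁻ p, (F p + (m : EReal)).abs
            ∂((μ : Measure ℝ).prod (μ : Measure ℝ)) : ℝ≥0∞) : EReal) - (m : EReal)
          ≤ (L : EReal)}) := by
  intro L hL
  set S : Set (ProbabilityMeasure ℝ) := {μ : ProbabilityMeasure ℝ |
        ((∫⁻ p, (F p + (m : EReal)).abs
            ∂((μ : Measure ℝ).prod (μ : Measure ℝ)) : ℝ≥0∞) : EReal) - (m : EReal)
          ≤ (L : EReal)} with hSdef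
  letI : PseudoMetricSpace (ProbabilityMeasure ℝ) :=
    TopologicalSpace.pseudoMetrizableSpacePseudoMetric _
  refine IsSeqCompact.isCompact ?_
  intro x hx
  have hy : ∀ n : ℕ, ∃ y ∈ S, dist (x n) y < 1 / (n + 1 : ℝ) := by
    intro n
    exact Metric.mem_closure_iff.1 (hx n) (1 / (n + 1 : ℝ)) (by positivity)
  choose y hyS hyx using hy
  have htight : ∀ e : ℝ, 0 < e → ∃ a : ℝ, ∀ n,
      (y n : Measure ℝ) {x | a < |x|} ≤ ENNReal.ofReal e := by
    intro e he
    obtain ⟨a, ha⟩ := level_set_tight F m hcoer L hL e he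
    exact ⟨a, fun n => ha (y n) (hyS n)⟩
  obtain ⟨μ, φ, hφ, hconv⟩ := helly y htight
  refine ⟨μ, ?_, φ, hφ, ?_⟩
  · exact mem_closure_of_tendsto hconv (Eventually.of_forall fun n => hyS (φ n))
  · rw [tendsto_iff_dist_tendsto_zero]
    have hbound : ∀ n, dist (x (φ n)) μ ≤ 1 / (n + 1 : ℝ) + dist (y (φ n)) μ := by
      intro n
      refine (dist_triangle (x (φ n)) (y (φ n)) μ).trans ?_
      have h1 : dist (x (φ n)) (y (φ n)) < 1 / ((φ n : ℝ) + 1) := hyx (φ n)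
      have h2 : 1 / ((φ n : ℝ) + 1) ≤ 1 / ((n : ℝ) + 1) := by
        apply one_div_le_one_div_of_le (by positivity)
        have h3 : (n : ℝ) ≤ (φ n : ℝ) := Nat.cast_le.2 hφ.le_apply
        linarith
      linarith
    have hlim : Tendsto (fun n : ℕ => 1 / (n + 1 : ℝ) + dist (y (φ n)) μ) atTop (𝓝 0) := by
      have h1 : Tendsto (fun n : ℕ => 1 / (n + 1 : ℝ)) atTop (𝓝 0) :=
        tendsto_one_div_add_atTop_nhds_zero_nat
      have h2 : Tendsto (fun n => dist (y (φ n)) μ) atTop (𝓝 0) :=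
        tendsto_iff_dist_tendsto_zero.1 hconv
      simpa using h1.add h2
    exact squeeze_zero (fun n => dist_nonneg) hbound hlim
end

section
/- Fix σ² > 0, β > 0, and κ ∈ (0, 1/2]. Let a = 2σ²β(1/2 - √(κ(1-κ))) and b = 2σ²β(1/2 + √(κ(1-κ))). Then the function x ↦ (1/(σ²βκπ x)) · √((x² - a)(b - x²)) on [√a, √b] (extended by 0 elsewhere) is a probability density: its Lebesgue integral over [√a, √b] equals 1. -/
open MeasureTheory

open Real

noncomputable def chiralF (a b y : ℝ) : ℝ :=
  Real.sqrt ((y^2-a)*(b-y^2)) - (a+b)/2 * Real.arcsin (((a+b)/2 - y^2)/((b-a)/2))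
    - Real.sqrt (a*b) * Real.arcsin (((a+b)/2*y^2 - a*b)/((b-a)/2*y^2))

lemma chiralF_val_b (a b : ℝ) (ha : 0 ≤ a) (hab : a < b) :
    chiralF a b (Real.sqrt b) = (a+b)/2 * (π/2) - Real.sqrt (a*b) * (π/2) := by
  have hb : 0 < b := lt_of_le_of_lt ha hab
  have hsq : Real.sqrt b ^ 2 = b := Real.sq_sqrt hb.le
  have hd : ((b-a)/2) ≠ 0 := ne_of_gt (by linarith)
  have hdb : ((b-a)/2*b) ≠ 0 := mul_ne_zero hd hb.ne'
  unfold chiralF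
  rw [hsq, show ((a+b)/2 - b)/((b-a)/2) = -1 by rw [div_eq_iff hd]; ring,
    show ((a+b)/2*b - a*b)/((b-a)/2*b) = 1 by rw [div_eq_iff hdb]; ring,
    Real.arcsin_neg_one, Real.arcsin_one]
  simp

lemma chiralF_val_a (a b : ℝ) (ha : 0 ≤ a) (hab : a < b) :
    chiralF a b (Real.sqrt a) = -((a+b)/2 * (π/2)) + Real.sqrt (a*b) * (π/2) := by
  have hsq : Real.sqrt a ^ 2 = a := Real.sq_sqrt ha
  have hd : ((b-a)/2) ≠ 0 := ne_of_gt (by linarith)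
  unfold chiralF
  rw [hsq, show ((a+b)/2 - a)/((b-a)/2) = 1 by rw [div_eq_iff hd]; ring, Real.arcsin_one]
  have h3 : Real.sqrt (a*b) * Real.arcsin (((a+b)/2*a - a*b)/((b-a)/2*a)) =
      Real.sqrt (a*b) * (-(π/2)) := by
    rcases eq_or_lt_of_le ha with ha0 | ha0
    · rw [← ha0]; norm_num
    · rw [show ((a+b)/2*a - a*b)/((b-a)/2*a) = -1 by
        rw [div_eq_iff (mul_ne_zero hd ha0.ne')]; ring, Real.arcsin_neg_one]
  rw [h3]
  simp


lemma term2 (a b x : ℝ) (hab : a < b) (h1 : a < x^2) (h2 : x^2 < b) :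
    HasDerivAt (fun y : ℝ => (a+b)/2 * Real.arcsin (((a+b)/2 - y^2)/((b-a)/2)))
      (-((a+b)*x) / Real.sqrt ((x^2-a)*(b-x^2))) x := by
  have hP : 0 < (x^2-a)*(b-x^2) := mul_pos (by linarith) (by linarith)
  set s := Real.sqrt ((x^2-a)*(b-x^2)) with hs_def
  have hs : 0 < s := Real.sqrt_pos.mpr hP
  set d := (b-a)/2 with hd_def
  have hd : (0:ℝ) < d := by rw [hd_def]; linarith
  have hp : HasDerivAt (fun y : ℝ => y^2) (2*x) x := by simpa using hasDerivAt_pow 2 x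
  have hg : HasDerivAt (fun y : ℝ => ((a+b)/2 - y^2)/d) ((0-2*x)/d) x :=
    ((hasDerivAt_const x ((a+b)/2)).sub hp).div_const _
  have hgx1 : ((a+b)/2 - x^2)/d < 1 := (div_lt_one hd).mpr (by rw [hd_def]; linarith)
  have hgxm1 : (-1:ℝ) < ((a+b)/2 - x^2)/d := (lt_div_iff₀ hd).mpr (by rw [hd_def]; linarith)
  have harc := (Real.hasDerivAt_arcsin (ne_of_gt hgxm1) (ne_of_lt hgx1)).comp x hg
  have hroot : Real.sqrt (1 - (((a+b)/2 - x^2)/d)^2) = s/d := by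
    rw [div_pow, one_sub_div (by positivity : d^2 ≠ 0),
      show d^2 - ((a+b)/2 - x^2)^2 = (x^2-a)*(b-x^2) by rw [hd_def]; ring,
      Real.sqrt_div hP.le, Real.sqrt_sq hd.le]
  have := harc.const_mul ((a+b)/2)
  convert this using 1
  · rfl
  · rfl
  · rfl
  rw [hroot]
  field_simp
  ring


lemma term3 (a b x : ℝ) (ha : 0 ≤ a) (hx : 0 < x) (h1 : a < x^2) (h2 : x^2 < b) :
    HasDerivAt (fun y : ℝ => Real.sqrt (a*b) * Real.arcsin (((a+b)/2*y^2 - a*b)/((b-a)/2*y^2)))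
      (2*a*b / (x * Real.sqrt ((x^2-a)*(b-x^2)))) x := by
  rcases eq_or_lt_of_le ha with ha0 | ha0
  · have hfun : (fun y : ℝ => Real.sqrt (a*b) * Real.arcsin (((a+b)/2*y^2 - a*b)/((b-a)/2*y^2)))
        = fun _ => (0:ℝ) := by
      funext y
      rw [← ha0, zero_mul, Real.sqrt_zero, zero_mul]
    rw [hfun, ← ha0]
    norm_num
    exact hasDerivAt_const x 0
  · have hb : 0 < b := lt_trans (lt_of_le_of_lt ha h1) h2
    have hP : 0 < (x^2-a)*(b-x^2) := mul_pos (by linarith) (by linarith)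
    set s := Real.sqrt ((x^2-a)*(b-x^2)) with hs_def
    have hs : 0 < s := Real.sqrt_pos.mpr hP
    have hs2 : s^2 = (x^2-a)*(b-x^2) := Real.sq_sqrt hP.le
    set c := Real.sqrt (a*b) with hc_def
    have hc : 0 < c := Real.sqrt_pos.mpr (mul_pos ha0 hb)
    have hc2 : c^2 = a*b := Real.sq_sqrt (mul_pos ha0 hb).le
    set d := (b-a)/2 with hd_def
    have hd : (0:ℝ) < d := by rw [hd_def]; linarith
    have hp : HasDerivAt (fun y : ℝ => y^2) (2*x) x := by simpa using hasDerivAt_pow 2 x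
    have hnum : HasDerivAt (fun y : ℝ => (a+b)/2*y^2 - a*b) ((a+b)/2*(2*x)) x :=
      (hp.const_mul ((a+b)/2)).sub_const _
    have hden : HasDerivAt (fun y : ℝ => d*y^2) (d*(2*x)) x := hp.const_mul d
    have hdenx : d*x^2 ≠ 0 := by positivity
    have hg := hnum.div hden hdenx
    have hdx : 0 < d*x^2 := by positivity
    have hkey : (d*x^2)^2 - ((a+b)/2*x^2 - a*b)^2 = (a*b)*((x^2-a)*(b-x^2)) := by
      rw [hd_def]; ring
    have hlt : ((a+b)/2*x^2 - a*b)^2 < (d*x^2)^2 := by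
      have := mul_pos (mul_pos ha0 hb) hP; linarith [hkey]
    have habs := abs_lt_of_sq_lt_sq' hlt hdx.le
    have hgx1 : ((a+b)/2*x^2 - a*b)/(d*x^2) < 1 := (div_lt_one hdx).mpr habs.2
    have hgxm1 : (-1:ℝ) < ((a+b)/2*x^2 - a*b)/(d*x^2) := (lt_div_iff₀ hdx).mpr (by linarith [habs.1])
    have harc := (Real.hasDerivAt_arcsin (ne_of_gt hgxm1) (ne_of_lt hgx1)).comp x hg
    have hroot : Real.sqrt (1 - (((a+b)/2*x^2 - a*b)/(d*x^2))^2) = c*s/(d*x^2) := by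
      rw [div_pow, one_sub_div (by positivity : (d*x^2)^2 ≠ 0), hkey,
        Real.sqrt_div (by positivity), Real.sqrt_mul (mul_pos ha0 hb).le, ← hs_def, ← hc_def,
        Real.sqrt_sq hdx.le]
    have := harc.const_mul c
    convert this using 1
    · rfl
    · rfl
    · rfl
    rw [hroot]
    field_simp [hs.ne', hc.ne', hd.ne']
    ring

lemma term1 (a b x : ℝ) (h1 : a < x^2) (h2 : x^2 < b) :
    HasDerivAt (fun y : ℝ => Real.sqrt ((y^2-a)*(b-y^2)))
      (x*(a+b-2*x^2) / Real.sqrt ((x^2-a)*(b-x^2))) x := by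
  have hP : 0 < (x^2-a)*(b-x^2) := mul_pos (by linarith) (by linarith)
  have hp : HasDerivAt (fun y : ℝ => y^2) (2*x) x := by simpa using hasDerivAt_pow 2 x
  have hinner : HasDerivAt (fun y : ℝ => (y^2-a)*(b-y^2))
      (2*x*(b-x^2) + (x^2-a)*(0-2*x)) x :=
    (hp.sub_const a).mul ((hasDerivAt_const x b).sub hp)
  have := hinner.sqrt (ne_of_gt hP)
  convert this using 1
  have hs : Real.sqrt ((x^2-a)*(b-x^2)) ≠ 0 := by positivity
  field_simp
  ring

lemma chiralF_hasDerivAt (a b x : ℝ) (ha : 0 ≤ a) (hx : 0 < x)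
    (h1 : a < x^2) (h2 : x^2 < b) :
    HasDerivAt (chiralF a b) (2 * Real.sqrt ((x^2-a)*(b-x^2)) / x) x := by
  have hab : a < b := lt_trans h1 h2
  have hP : 0 < (x^2-a)*(b-x^2) := mul_pos (by linarith) (by linarith)
  have hs : 0 < Real.sqrt ((x^2-a)*(b-x^2)) := Real.sqrt_pos.mpr hP
  have hs2 : Real.sqrt ((x^2-a)*(b-x^2))^2 = (x^2-a)*(b-x^2) := Real.sq_sqrt hP.le
  have hF := ((term1 a b x h1 h2).sub (term2 a b x hab h1 h2)).sub (term3 a b x ha hx h1 h2)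
  convert hF using 1
  · rfl
  · rfl
  · rfl
  set s := Real.sqrt ((x^2-a)*(b-x^2))
  rw [div_sub_div _ _ hs.ne' hs.ne']
  field_simp
  linear_combination 2 * hs2

lemma chiralF_continuousOn (a b : ℝ) (ha : 0 ≤ a) (hab : a < b) :
    ContinuousOn (chiralF a b) (Set.Icc (Real.sqrt a) (Real.sqrt b)) := by
  have c1 : Continuous fun y : ℝ => Real.sqrt ((y^2-a)*(b-y^2)) := by fun_prop
  have c2 : Continuous fun y : ℝ => (a+b)/2 * Real.arcsin (((a+b)/2 - y^2)/((b-a)/2)) :=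
    continuous_const.mul (Real.continuous_arcsin.comp
      ((continuous_const.sub (continuous_pow 2)).div_const _))
  have c3 : ContinuousOn (fun y : ℝ =>
      Real.sqrt (a*b) * Real.arcsin (((a+b)/2*y^2 - a*b)/((b-a)/2*y^2)))
      (Set.Icc (Real.sqrt a) (Real.sqrt b)) := by
    rcases eq_or_lt_of_le ha with ha0 | ha0
    · have hfun : (fun y : ℝ => Real.sqrt (a*b) *
          Real.arcsin (((a+b)/2*y^2 - a*b)/((b-a)/2*y^2))) = fun _ => (0:ℝ) := by
        funext y
        rw [← ha0, zero_mul, Real.sqrt_zero, zero_mul]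
      rw [hfun]
      exact continuousOn_const
    · apply continuousOn_const.mul
      apply Real.continuous_arcsin.comp_continuousOn
      apply ContinuousOn.div (by fun_prop) (by fun_prop)
      intro y hy
      have hy0 : 0 < y := lt_of_lt_of_le (Real.sqrt_pos.mpr ha0) hy.1
      have : (0:ℝ) < (b-a)/2 := by linarith
      positivity
  exact ((c1.sub c2).continuousOn).sub c3

/-- The limiting positive-eigenvalue density of the chiral Gaussian ensembles,
`x ↦ (1/(σ²βκπx))√((x²-a)(b-x²))` on `[√a, √b]` with
`a = 2σ²β(1/2 - √(κ(1-κ)))`, `b = 2σ²β(1/2 + √(κ(1-κ)))`, integrates to `1`. -/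
theorem chiral_density_integral (σ2 β κ : ℝ) (hσ : 0 < σ2) (hβ : 0 < β)
    (hκ1 : 0 < κ) (hκ2 : κ ≤ 1 / 2) :
    ∫ x in Set.Icc (Real.sqrt (2 * σ2 * β * (1 / 2 - Real.sqrt (κ * (1 - κ)))))
        (Real.sqrt (2 * σ2 * β * (1 / 2 + Real.sqrt (κ * (1 - κ))))),
      1 / (σ2 * β * κ * Real.pi * x) *
        Real.sqrt ((x ^ 2 - 2 * σ2 * β * (1 / 2 - Real.sqrt (κ * (1 - κ)))) *
          (2 * σ2 * β * (1 / 2 + Real.sqrt (κ * (1 - κ))) - x ^ 2)) = 1 := by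
  have hk : 0 < κ * (1-κ) := mul_pos hκ1 (by linarith)
  set s0 := Real.sqrt (κ * (1-κ)) with hs0_def
  have hs0pos : 0 < s0 := Real.sqrt_pos.mpr hk
  have hs0sq : s0^2 = κ*(1-κ) := Real.sq_sqrt hk.le
  have hs0le : s0 ≤ 1/2 := by
    rw [show (1:ℝ)/2 = Real.sqrt ((1/2)^2) by rw [Real.sqrt_sq]; norm_num]
    exact Real.sqrt_le_sqrt (by nlinarith)
  set a := 2 * σ2 * β * (1 / 2 - s0) with ha_def
  set b := 2 * σ2 * β * (1 / 2 + s0) with hb_def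
  have ha : 0 ≤ a := by
    apply mul_nonneg (by positivity); linarith
  have hab : a < b := by
    rw [ha_def, hb_def]
    apply mul_lt_mul_of_pos_left (by linarith) (by positivity)
  have hb : 0 < b := lt_of_le_of_lt ha hab
  have hAB : Real.sqrt a ≤ Real.sqrt b := Real.sqrt_le_sqrt hab.le
  have hcval : Real.sqrt (a*b) = 2*σ2*β*(1/2 - κ) := by
    rw [show a*b = (2*σ2*β*(1/2-κ))^2 by
      rw [ha_def, hb_def]; linear_combination (-4*σ2^2*β^2) * hs0sq]
    exact Real.sqrt_sq (by nlinarith)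
  have hpi := Real.pi_pos
  -- the antiderivative
  set Φ : ℝ → ℝ := fun y => (1/(2*σ2*β*κ*Real.pi)) * chiralF a b y with hΦ_def
  have hcont : ContinuousOn Φ (Set.Icc (Real.sqrt a) (Real.sqrt b)) :=
    (chiralF_continuousOn a b ha hab).const_smul (1/(2*σ2*β*κ*Real.pi)) |>.congr
      (fun y _ => by simp [hΦ_def, smul_eq_mul])
  have hderiv : ∀ x ∈ Set.Ioo (Real.sqrt a) (Real.sqrt b),
      HasDerivAt Φ (1 / (σ2 * β * κ * Real.pi * x) *
        Real.sqrt ((x ^ 2 - a) * (b - x ^ 2))) x := by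
    intro x hx
    have hx0 : 0 < x := lt_of_le_of_lt (Real.sqrt_nonneg a) hx.1
    have h1 : a < x^2 := (Real.sqrt_lt' hx0).mp hx.1
    have h2 : x^2 < b := (Real.lt_sqrt hx0.le).mp hx.2
    have hP : 0 < (x^2-a)*(b-x^2) := mul_pos (by linarith) (by linarith)
    have hs : 0 < Real.sqrt ((x^2-a)*(b-x^2)) := Real.sqrt_pos.mpr hP
    have := (chiralF_hasDerivAt a b x ha hx0 h1 h2).const_mul (1/(2*σ2*β*κ*Real.pi))
    convert this using 1
    · rfl
    · rfl
    field_simp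
  have hint : IntervalIntegrable (fun x => 1 / (σ2 * β * κ * Real.pi * x) *
      Real.sqrt ((x ^ 2 - a) * (b - x ^ 2))) MeasureTheory.volume
      (Real.sqrt a) (Real.sqrt b) := by
    rcases eq_or_lt_of_le ha with ha0 | ha0
    · -- a = 0
      rw [intervalIntegrable_iff_integrableOn_Ioc_of_le hAB]
      have hg : MeasureTheory.IntegrableOn
          (fun y : ℝ => 1/(σ2*β*κ*Real.pi) * Real.sqrt (b - y^2))
          (Set.Ioc (Real.sqrt a) (Real.sqrt b)) MeasureTheory.volume := by
        apply Continuous.integrableOn_Ioc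
        fun_prop
      apply hg.congr_fun _ measurableSet_Ioc
      intro y hy
      have hy0 : 0 < y := lt_of_le_of_lt (Real.sqrt_nonneg a) hy.1
      have hyb : y^2 ≤ b := by
        have := hy.2
        nlinarith [Real.sq_sqrt hb.le, Real.sqrt_nonneg b]
      have hC : σ2*β*κ*Real.pi ≠ 0 := by positivity
      simp only [← ha0, sub_zero]
      rw [Real.sqrt_mul (sq_nonneg y), Real.sqrt_sq hy0.le]
      field_simp
    · -- a > 0
      apply ContinuousOn.intervalIntegrable
      rw [Set.uIcc_of_le hAB]
      apply ContinuousOn.mul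
      · apply ContinuousOn.div continuousOn_const (by fun_prop)
        intro y hy
        have hy0 : 0 < y := lt_of_lt_of_le (Real.sqrt_pos.mpr ha0) hy.1
        positivity
      · fun_prop
  have key := intervalIntegral.integral_eq_sub_of_hasDerivAt_of_le hAB hcont hderiv hint
  rw [MeasureTheory.integral_Icc_eq_integral_Ioc, ← intervalIntegral.integral_of_le hAB,
    key, hΦ_def]
  simp only
  rw [chiralF_val_b a b ha hab, chiralF_val_a a b ha hab, hcval, ha_def, hb_def]
  field_simp
  ring
end
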